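/- For all vectors ω, γ, δω, δγ ∈ ℝ³, the inverse right-trivialized derivative of the SE(3) Cayley-type map satisfies the block identity (I₄ − X(ω,γ)/2) · X(δω,δγ) · (I₄ + X(ω,γ)/2) = X(ω', γ'), where ω' := δω − (1/2) ω × δω + (1/4) (ω · δω) ω and γ' := (I₃ − (1/2)ω̂)(δγ − (1/2) γ × δω). Equivalently, the linear map (δω,δγ) ↦ (ω',γ') on ℝ³ × ℝ³ is given by the 6×6 block matrix [[I₃ − (1/2)ω̂ + (1/4) ω ωᵀ, 0],[−(1/2)(I₃ − (1/2)ω̂) γ̂, I₃ − (1/2)ω̂]]. -/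

import Mathlib

open Matrix

noncomputable section

/-- The hat map `ω ↦ ω̂` sending a vector in `ℝ³` to the skew-symmetric matrix
satisfying `ω̂ v = ω × v`. -/
def hat (ω : EuclideanSpace ℝ (Fin 3)) : Matrix (Fin 3) (Fin 3) ℝ :=
  !![0, -ω 2, ω 1; ω 2, 0, -ω 0; -ω 1, ω 0, 0]

/-- The cross product on `ℝ³`. -/
def cross (a b : EuclideanSpace ℝ (Fin 3)) : EuclideanSpace ℝ (Fin 3) :=
  WithLp.toLp 2 ![a 1 * b 2 - a 2 * b 1, a 2 * b 0 - a 0 * b 2, a 0 * b 1 - a 1 * b 0]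

/-- The dot product on `ℝ³`. -/
def dot3 (a b : EuclideanSpace ℝ (Fin 3)) : ℝ :=
  a 0 * b 0 + a 1 * b 1 + a 2 * b 2

/-- The embedding of `se(3)` into `4×4` real matrices: `X(ω,γ)` has upper-left `3×3`
block `ω̂`, upper-right column `γ`, and zero last row. -/
def Xse (ω γ : EuclideanSpace ℝ (Fin 3)) : Matrix (Fin 4) (Fin 4) ℝ :=
  !![0, -ω 2, ω 1, γ 0;
     ω 2, 0, -ω 0, γ 1;
     -ω 1, ω 0, 0, γ 2;
     0, 0, 0, 0]

set_option maxHeartbeats 4000000 in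
/-- The inverse right-trivialized derivative of the `SE(3)` Cayley-type map:
`(I₄ − X(ω,γ)/2) X(δω,δγ) (I₄ + X(ω,γ)/2) = X(ω',γ')` with
`ω' = δω − (1/2) ω × δω + (1/4)(ω·δω) ω` and `γ' = (I₃ − (1/2)ω̂)(δγ − (1/2) γ × δω)`;
equivalently, `(δω,δγ) ↦ (ω',γ')` is given by the `6×6` block matrix
`[[I₃ − (1/2)ω̂ + (1/4) ω ωᵀ, 0], [−(1/2)(I₃ − (1/2)ω̂) γ̂, I₃ − (1/2)ω̂]]`. -/
theorem dtau_inverse_block_identity (ω γ δω δγ : EuclideanSpace ℝ (Fin 3)) :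
    ((1 : Matrix (Fin 4) (Fin 4) ℝ) - (1/2 : ℝ) • Xse ω γ) * Xse δω δγ *
        ((1 : Matrix (Fin 4) (Fin 4) ℝ) + (1/2 : ℝ) • Xse ω γ)
      = Xse (δω - (1/2 : ℝ) • cross ω δω + (1/4 : ℝ) • (dot3 ω δω • ω))
          (WithLp.toLp 2 (((1 : Matrix (Fin 3) (Fin 3) ℝ) - (1/2 : ℝ) • hat ω) *ᵥ
            (δγ - (1/2 : ℝ) • cross γ δω))) ∧
    (Matrix.fromBlocks
          ((1 : Matrix (Fin 3) (Fin 3) ℝ) - (1/2 : ℝ) • hat ω +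
            (1/4 : ℝ) • vecMulVec (ω : Fin 3 → ℝ) (ω : Fin 3 → ℝ))
          (0 : Matrix (Fin 3) (Fin 3) ℝ)
          (-((1/2 : ℝ) • (((1 : Matrix (Fin 3) (Fin 3) ℝ) - (1/2 : ℝ) • hat ω) * hat γ)))
          ((1 : Matrix (Fin 3) (Fin 3) ℝ) - (1/2 : ℝ) • hat ω)) *ᵥ
        Sum.elim (δω : Fin 3 → ℝ) (δγ : Fin 3 → ℝ)
      = Sum.elim
          ((δω - (1/2 : ℝ) • cross ω δω + (1/4 : ℝ) • (dot3 ω δω • ω) : EuclideanSpace ℝ (Fin 3)) :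
            Fin 3 → ℝ)
          (((1 : Matrix (Fin 3) (Fin 3) ℝ) - (1/2 : ℝ) • hat ω) *ᵥ
            (δγ - (1/2 : ℝ) • cross γ δω)) := by
  constructor
  · ext i j
    fin_cases i <;> fin_cases j <;>
      simp [Xse, hat, cross, dot3, Matrix.mul_apply, Fin.sum_univ_succ, Matrix.one_apply,
        Matrix.mulVec, dotProduct, PiLp.sub_apply, PiLp.add_apply, PiLp.smul_apply,
        Matrix.vecHead, Matrix.vecTail, smul_eq_mul] <;> ring
  · funext i
    rcases i with i | i <;> fin_cases i <;>
      simp [Matrix.fromBlocks, Matrix.mulVec, dotProduct, Fin.sum_univ_succ,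
        hat, cross, dot3, Matrix.mul_apply, Matrix.one_apply, vecMulVec, PiLp.sub_apply,
        PiLp.add_apply, PiLp.smul_apply, smul_eq_mul, Matrix.vecHead, Matrix.vecTail] <;> ring
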